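/- Fix an S-path S = (S_0,...,S_n). The number of set partitions p of {1,...,n} that correspond to S equals the product over all j in {1,...,n} with S_j > S_{j-1} of the binomial coefficient C(j - 1 - S_{j-1}, j - S_j). -/

import Mathlib

open Finset

/-- Auxiliary predicate: partition `p` of `T` has cell-maxima set `J` and the cell with
maximum `j` has `c j` elements. -/
def GoodSP (T J : Finset ℕ) (c : ℕ → ℕ) (p : Finpartition T) : Prop :=
  (∀ j ∈ J, ∃ C ∈ p.parts, j ∈ C ∧ (∀ x ∈ C, x ≤ j) ∧ C.card = c j) ∧
  (∀ C ∈ p.parts, ∃ j ∈ J, j ∈ C ∧ ∀ x ∈ C, x ≤ j)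

/-- Removing a cell from a finpartition of a finset. -/
def SPremove {T : Finset ℕ} (p : Finpartition T) (C : Finset ℕ) (hC : C ∈ p.parts) :
    Finpartition (T \ C) where
  parts := p.parts.erase C
  supIndep := p.supIndep.subset (erase_subset _ _)
  sup_parts := by
    ext x
    simp only [Finset.mem_sup, Finset.mem_sdiff, Finset.mem_erase, id]
    constructor
    · rintro ⟨D, ⟨hDC, hD⟩, hx⟩
      exact ⟨p.le hD hx, fun hxC => hDC (p.eq_of_mem_parts hD hC hx hxC)⟩
    · rintro ⟨hxT, hxC⟩
      obtain ⟨D, hD, hxD⟩ := p.exists_mem hxT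
      exact ⟨D, ⟨fun h => hxC (h ▸ hxD), hD⟩, hxD⟩
  bot_notMem h := p.bot_notMem (mem_of_mem_erase h)

@[simp] lemma SPremove_parts {T : Finset ℕ} (p : Finpartition T) (C : Finset ℕ)
    (hC : C ∈ p.parts) : (SPremove p C hC).parts = p.parts.erase C := rfl

lemma fiber_card (T J : Finset ℕ) (c : ℕ → ℕ) (m : ℕ) (hmT : m ∈ T) (hmJ : m ∈ J)
    (hmin : ∀ j ∈ J, m ≤ j) (hcm : 1 ≤ c m) (A : Finset ℕ) (hA : A ⊆ T.filter (· < m))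
    (hAcard : A.card = c m - 1) :
    Nat.card {p : Finpartition T // GoodSP T J c p ∧ (p.part m).erase m = A} =
    Nat.card {q : Finpartition ((T \ insert m A : Finset ℕ)) //
      GoodSP (T \ insert m A) (J.erase m) c q} := by
  have hAlt : ∀ x ∈ A, x < m := fun x hx => (mem_filter.1 (hA hx)).2
  have hmA : m ∉ A := fun h => lt_irrefl m (hAlt m h)
  have hBT : insert m A ⊆ T := insert_subset hmT (fun x hx => (mem_filter.1 (hA hx)).1)
  have hBbot : (insert m A : Finset ℕ) ≠ ⊥ := by
    rw [Finset.bot_eq_empty]; exact (insert_nonempty m A).ne_empty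
  have hBcard : (insert m A).card = c m := by
    rw [card_insert_of_notMem hmA, hAcard]; omega
  have hBle : ∀ x ∈ insert m A, x ≤ m := by
    intro x hx
    rcases mem_insert.1 hx with rfl | hx
    · exact le_refl x
    · exact (hAlt x hx).le
  refine Nat.card_congr ⟨?_, ?_, ?_, ?_⟩
  · -- toFun
    rintro ⟨p, hG, hf⟩
    have hCmem := p.part_mem.2 hmT
    have hmC := p.mem_part hmT
    have hpart : p.part m = insert m A := by rw [← hf, insert_erase hmC]
    have hCle : ∀ x ∈ p.part m, x ≤ m := by
      obtain ⟨D, hD, hmD, hDle, _⟩ := hG.1 m hmJ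
      have hDC : D = p.part m := p.eq_of_mem_parts hD hCmem hmD hmC
      exact hDC ▸ hDle
    refine ⟨(SPremove p (p.part m) hCmem).copy (by rw [hpart]), ?_, ?_⟩
    · -- first Good condition
      intro j hj
      obtain ⟨hjm, hjJ⟩ := mem_erase.1 hj
      obtain ⟨D, hD, hjD, hDle, hDcard⟩ := hG.1 j hjJ
      have hDne : D ≠ p.part m := fun h =>
        absurd (hCle j (h ▸ hjD)) (not_le.2 (lt_of_le_of_ne (hmin j hjJ) (Ne.symm hjm)))
      exact ⟨D, by
        simp only [Finpartition.copy_parts, SPremove_parts, mem_erase]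
        exact ⟨hDne, hD⟩, hjD, hDle, hDcard⟩
    · intro D hD
      rw [Finpartition.copy_parts, SPremove_parts, mem_erase] at hD
      obtain ⟨hDne, hDp⟩ := hD
      obtain ⟨j, hjJ, hjD, hjle⟩ := hG.2 D hDp
      have hjm : j ≠ m := fun h => hDne (p.eq_of_mem_parts hDp hCmem (h ▸ hjD) hmC)
      exact ⟨j, mem_erase.2 ⟨hjm, hjJ⟩, hjD, hjle⟩
  · -- invFun
    rintro ⟨q, hq⟩
    have hBnotq : insert m A ∉ q.parts := fun h =>
      (mem_sdiff.1 (q.le h (mem_insert_self m A))).2 (mem_insert_self m A)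
    refine ⟨q.extend hBbot sdiff_disjoint (sdiff_sup_cancel hBT), ⟨?_, ?_⟩, ?_⟩
    · intro j hjJ
      by_cases h : j = m
      · subst h
        exact ⟨insert j A, mem_insert_self _ _, mem_insert_self _ _, hBle, hBcard⟩
      · obtain ⟨D, hD, hjD, hDle, hDcard⟩ := hq.1 j (mem_erase.2 ⟨h, hjJ⟩)
        exact ⟨D, by
          rw [Finpartition.extend_parts]; exact mem_insert_of_mem hD, hjD, hDle, hDcard⟩
    · intro D hD
      rw [Finpartition.extend_parts, mem_insert] at hD
      rcases hD with rfl | hD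
      · exact ⟨m, hmJ, mem_insert_self _ _, hBle⟩
      · obtain ⟨j, hjJ, hjD, hjle⟩ := hq.2 D hD
        exact ⟨j, mem_of_mem_erase hjJ, hjD, hjle⟩
    · have hpmem : insert m A ∈ (q.extend hBbot sdiff_disjoint (sdiff_sup_cancel hBT)).parts := by
        rw [Finpartition.extend_parts]; exact mem_insert_self _ _
      rw [Finpartition.part_eq_of_mem _ hpmem (mem_insert_self m A), erase_insert hmA]
  · -- left_inv
    rintro ⟨p, hG, hf⟩
    apply Subtype.ext
    apply Finpartition.ext
    have hCmem := p.part_mem.2 hmT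
    have hmC := p.mem_part hmT
    have hpart : p.part m = insert m A := by rw [← hf, insert_erase hmC]
    simp only [Finpartition.extend_parts, Finpartition.copy_parts, SPremove_parts]
    rw [← hpart, insert_erase hCmem]
  · -- right_inv
    rintro ⟨q, hq⟩
    have hBnotq : insert m A ∉ q.parts := fun h =>
      (mem_sdiff.1 (q.le h (mem_insert_self m A))).2 (mem_insert_self m A)
    apply Subtype.ext
    apply Finpartition.ext
    have hpmem : insert m A ∈ (q.extend hBbot sdiff_disjoint (sdiff_sup_cancel hBT)).parts := by
      rw [Finpartition.extend_parts]; exact mem_insert_self _ _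
    simp only [Finpartition.copy_parts, SPremove_parts, Finpartition.extend_parts]
    rw [Finpartition.part_eq_of_mem _ hpmem (mem_insert_self m A), erase_insert hBnotq]

lemma card_filter_sdiff (T B : Finset ℕ) (hBT : B ⊆ T) (P : ℕ → Prop) [DecidablePred P]
    (hBP : ∀ x ∈ B, P x) : ((T \ B).filter P).card = (T.filter P).card - B.card := by
  have h1 : (T \ B).filter P = T.filter P \ B := by
    ext x
    simp only [mem_filter, mem_sdiff]
    tauto
  rw [h1, card_sdiff_of_subset (fun x hx => mem_filter.2 ⟨hBT hx, hBP x hx⟩)]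

lemma erase_filter_sum (J : Finset ℕ) (c : ℕ → ℕ) (m : ℕ) (hmJ : m ∈ J)
    (P : ℕ → Prop) [DecidablePred P] (hPm : P m) :
    c m + ∑ i ∈ (J.erase m).filter P, c i = ∑ i ∈ J.filter P, c i := by
  have h1 : (J.erase m).filter P = (J.filter P).erase m := by
    ext x
    simp only [mem_filter, mem_erase]
    tauto
  rw [h1, Finset.add_sum_erase _ c (mem_filter.2 ⟨hmJ, hPm⟩)]

lemma keySP : ∀ (k : ℕ) (T J : Finset ℕ) (c : ℕ → ℕ), J.card = k → J ⊆ T →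
    (∀ j ∈ J, 1 ≤ c j) → (∑ j ∈ J, c j = T.card) →
    (∀ j ∈ J, ∑ i ∈ J.filter (· ≤ j), c i ≤ (T.filter (· ≤ j)).card) →
    Nat.card {p : Finpartition T // GoodSP T J c p} =
      ∏ j ∈ J, Nat.choose ((T.filter (· < j)).card - ∑ i ∈ J.filter (· < j), c i)
        (c j - 1) := by
  intro k
  induction k with
  | zero =>
    intro T J c hcard hJT hc1 hsum hpre
    have hJ : J = ∅ := card_eq_zero.1 hcard
    subst hJ
    have hT : T = ∅ := card_eq_zero.1 (by rw [← hsum, sum_empty])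
    subst hT
    rw [prod_empty]
    have hall : ∀ p : Finpartition (∅ : Finset ℕ), GoodSP ∅ ∅ c p := by
      intro p
      have hp : p.parts = ∅ := Finpartition.parts_eq_empty_iff.2 Finset.bot_eq_empty.symm
      exact ⟨fun j hj => absurd hj (notMem_empty j),
        fun C hC => absurd hC (by rw [hp]; exact notMem_empty C)⟩
    haveI : Unique (Finpartition (∅ : Finset ℕ)) := by
      rw [← Finset.bot_eq_empty]; infer_instance
    rw [Nat.card_congr (Equiv.subtypeUnivEquiv hall)]
    exact Nat.card_unique
  | succ k IH =>
    intro T J c hcard hJT hc1 hsum hpre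
    classical
    have hJne : J.Nonempty := card_pos.1 (by omega)
    set m := J.min' hJne with hm
    have hmJ : m ∈ J := J.min'_mem hJne
    have hmT : m ∈ T := hJT hmJ
    have hmin : ∀ j ∈ J, m ≤ j := fun j hj => J.min'_le j hj
    have hcm : 1 ≤ c m := hc1 m hmJ
    have hfilm : J.filter (· < m) = ∅ :=
      filter_eq_empty_iff.2 (fun j hj => not_lt.2 (hmin j hj))
    have splitJ : ∀ j ∈ J, ∑ i ∈ J.filter (· ≤ j), c i = c j + ∑ i ∈ J.filter (· < j), c i := by
      intro j hj
      have hins : J.filter (· ≤ j) = insert j (J.filter (· < j)) := by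
        ext x
        simp only [mem_filter, mem_insert]
        constructor
        · rintro ⟨hx, hxj⟩
          rcases eq_or_lt_of_le hxj with rfl | h
          · exact Or.inl rfl
          · exact Or.inr ⟨hx, h⟩
        · rintro (rfl | ⟨hx, h⟩)
          · exact ⟨hj, le_refl _⟩
          · exact ⟨hx, h.le⟩
      rw [hins, sum_insert (by simp)]
    have splitT : ∀ j ∈ T, (T.filter (· ≤ j)).card = (T.filter (· < j)).card + 1 := by
      intro j hj
      have hins : T.filter (· ≤ j) = insert j (T.filter (· < j)) := by
        ext x
        simp only [mem_filter, mem_insert]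
        constructor
        · rintro ⟨hx, hxj⟩
          rcases eq_or_lt_of_le hxj with rfl | h
          · exact Or.inl rfl
          · exact Or.inr ⟨hx, h⟩
        · rintro (rfl | ⟨hx, h⟩)
          · exact ⟨hj, le_refl _⟩
          · exact ⟨hx, h.le⟩
      rw [hins, card_insert_of_notMem (by simp)]
    have hYle : ∀ j ∈ J, ∑ i ∈ J.filter (· < j), c i ≤ (T.filter (· < j)).card := by
      intro j hj
      have h1 := hpre j hj
      have h2 := splitJ j hj
      have h3 := splitT j (hJT hj)
      have h4 := hc1 j hj
      omega
    -- fiber decomposition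
    have step1 : Nat.card {p : Finpartition T // GoodSP T J c p} =
        ∑ A ∈ Finset.powersetCard (c m - 1) (T.filter (· < m)),
          Nat.card {p : Finpartition T // GoodSP T J c p ∧ (p.part m).erase m = A} := by
      rw [Nat.card_eq_fintype_card, Fintype.card_subtype]
      rw [card_eq_sum_card_fiberwise
        (f := fun p : Finpartition T => (p.part m).erase m)
        (t := Finset.powersetCard (c m - 1) (T.filter (· < m)))
        ?_]
      · refine Finset.sum_congr rfl fun A _ => ?_
        rw [Nat.card_eq_fintype_card, Fintype.card_subtype, filter_filter]
      · intro p hp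
        rw [mem_coe, mem_filter] at hp
        obtain ⟨-, hG⟩ := hp
        have hCmem := p.part_mem.2 hmT
        have hmC := p.mem_part hmT
        obtain ⟨D, hD, hmD, hDle, hDcard⟩ := hG.1 m hmJ
        have hDC : D = p.part m := p.eq_of_mem_parts hD hCmem hmD hmC
        subst hDC
        rw [mem_coe, mem_powersetCard]
        constructor
        · intro x hx
          obtain ⟨hxm, hxD⟩ := mem_erase.1 hx
          exact mem_filter.2 ⟨p.le hCmem hxD, lt_of_le_of_ne (hDle x hxD) hxm⟩
        · rw [card_erase_of_mem hmC, hDcard]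
    rw [step1]
    -- evaluate each fiber
    have step2 : ∀ A ∈ Finset.powersetCard (c m - 1) (T.filter (· < m)),
        Nat.card {p : Finpartition T // GoodSP T J c p ∧ (p.part m).erase m = A} =
        ∏ j ∈ J.erase m,
          Nat.choose ((T.filter (· < j)).card - ∑ i ∈ J.filter (· < j), c i) (c j - 1) := by
      intro A hA
      rw [mem_powersetCard] at hA
      obtain ⟨hAsub, hAcard⟩ := hA
      have hAlt : ∀ x ∈ A, x < m := fun x hx => (mem_filter.1 (hAsub hx)).2
      have hmA : m ∉ A := fun h => lt_irrefl m (hAlt m h)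
      have hBT : insert m A ⊆ T :=
        insert_subset hmT (fun x hx => (mem_filter.1 (hAsub hx)).1)
      have hBcard : (insert m A).card = c m := by
        rw [card_insert_of_notMem hmA, hAcard]; omega
      have hBlem : ∀ x ∈ insert m A, x ≤ m := by
        intro x hx
        rcases mem_insert.1 hx with rfl | hx
        · exact le_rfl
        · exact (hAlt x hx).le
      rw [fiber_card T J c m hmT hmJ hmin hcm A hAsub hAcard]
      rw [IH (T \ insert m A) (J.erase m) c
        (by rw [card_erase_of_mem hmJ, hcard]; omega)
        (by
          intro j hj
          obtain ⟨hjm, hjJ⟩ := mem_erase.1 hj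
          have hmj : m < j := lt_of_le_of_ne (hmin j hjJ) (Ne.symm hjm)
          refine mem_sdiff.2 ⟨hJT hjJ, fun hjB => ?_⟩
          rcases mem_insert.1 hjB with rfl | hjA
          · exact absurd rfl hjm
          · exact absurd (hAlt j hjA) (not_lt.2 hmj.le))
        (fun j hj => hc1 j (mem_of_mem_erase hj))
        (by
          have h1 := Finset.add_sum_erase _ c hmJ
          have h2 : (T \ insert m A).card = T.card - (insert m A).card :=
            card_sdiff_of_subset hBT
          have h3 : (insert m A).card ≤ T.card := card_le_card hBT
          omega)
        (by
          intro j hj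
          obtain ⟨hjm, hjJ⟩ := mem_erase.1 hj
          have hmj : m < j := lt_of_le_of_ne (hmin j hjJ) (Ne.symm hjm)
          have h1 := erase_filter_sum J c m hmJ (· ≤ j) hmj.le
          have h2 : ((T \ insert m A).filter (· ≤ j)).card =
              (T.filter (· ≤ j)).card - (insert m A).card :=
            card_filter_sdiff T _ hBT _ (fun x hx => (hBlem x hx).trans hmj.le)
          have h3 : (insert m A).card ≤ (T.filter (· ≤ j)).card := by
            apply card_le_card
            intro x hx
            exact mem_filter.2 ⟨hBT hx, (hBlem x hx).trans hmj.le⟩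
          have h4 := hpre j hjJ
          omega)]
      refine Finset.prod_congr rfl fun j hj => ?_
      obtain ⟨hjm, hjJ⟩ := mem_erase.1 hj
      have hmj : m < j := lt_of_le_of_ne (hmin j hjJ) (Ne.symm hjm)
      have h1 := erase_filter_sum J c m hmJ (· < j) hmj
      have h2 : ((T \ insert m A).filter (· < j)).card =
          (T.filter (· < j)).card - (insert m A).card :=
        card_filter_sdiff T _ hBT _ (fun x hx => lt_of_le_of_lt (hBlem x hx) hmj)
      have h3 : c m ≤ ∑ i ∈ J.filter (· < j), c i :=
        single_le_sum (f := c) (fun i _ => Nat.zero_le _) (mem_filter.2 ⟨hmJ, hmj⟩)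
      have h4 := hYle j hjJ
      congr 1
      omega
    rw [Finset.sum_congr rfl step2, Finset.sum_const, Finset.card_powersetCard]
    rw [← Finset.mul_prod_erase J _ hmJ, hfilm, sum_empty, Nat.sub_zero, smul_eq_mul]

/-- A set partition `p` of `{1,...,n}` corresponds to an S-path `S` if (i) the maximal
elements of the cells of `p` are exactly the indices `j` with `S j > S (j-1)`, and
(ii) the cell with maximal element `j` has size `S j - S (j-1)`. -/
def Corresponds (n : ℕ) (S : ℕ → ℕ) (p : Finpartition (Finset.Icc 1 n)) : Prop :=
  ∀ j ∈ Finset.Icc 1 n,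
    ((∃ C ∈ p.parts, j ∈ C ∧ ∀ x ∈ C, x ≤ j) ↔ S (j - 1) < S j) ∧
    (∀ C ∈ p.parts, j ∈ C → (∀ x ∈ C, x ≤ j) → C.card = S j - S (j - 1))

/-- The number of set partitions of `{1,...,n}` corresponding to a fixed S-path `S`
equals `∏_{j : S_j > S_{j-1}} C(j - 1 - S_{j-1}, j - S_j)`. -/
theorem card_partitions_corresponding (n : ℕ) (S : ℕ → ℕ)
    (h0 : S 0 = 0) (hn : S n = n) (hle : ∀ j ≤ n, S j ≤ j)
    (hmono : ∀ j, S j ≤ S (j + 1)) :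
    Nat.card {p : Finpartition (Finset.Icc 1 n) // Corresponds n S p} =
      ∏ j ∈ (Finset.Icc 1 n).filter (fun j => S (j - 1) < S j),
        Nat.choose (j - 1 - S (j - 1)) (j - S j) := by
  classical
  set T : Finset ℕ := Finset.Icc 1 n with hT
  set J : Finset ℕ := T.filter (fun j => S (j - 1) < S j) with hJ
  set c : ℕ → ℕ := fun j => S j - S (j - 1) with hc
  have hmono' : ∀ i j, i ≤ j → S i ≤ S j := fun i j hij => by
    induction hij with
    | refl => exact le_rfl
    | step _ ih => exact ih.trans (hmono _)
  -- telescoping sum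
  have tele0 : ∀ t, ∑ i ∈ Finset.Icc 1 t, c i = S t := by
    intro t
    induction t with
    | zero => rw [show Finset.Icc 1 0 = ∅ from Finset.Icc_eq_empty (by omega), sum_empty, h0]
    | succ t ih =>
      rw [Finset.sum_Icc_succ_top (by omega : 1 ≤ t + 1), ih]
      have h1 := hmono t
      simp only [hc, Nat.add_sub_cancel]
      omega
  have sumJle : ∀ t, t ≤ n → ∑ i ∈ J.filter (· ≤ t), c i = S t := by
    intro t ht
    have hflt : J.filter (· ≤ t) = (Finset.Icc 1 t).filter (fun i => S (i - 1) < S i) := by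
      ext i
      simp only [hJ, hT, mem_filter, Finset.mem_Icc]
      constructor
      · rintro ⟨⟨⟨h1, _⟩, h3⟩, h4⟩
        exact ⟨⟨h1, h4⟩, h3⟩
      · rintro ⟨⟨h1, h4⟩, h3⟩
        exact ⟨⟨⟨h1, h4.trans ht⟩, h3⟩, h4⟩
    rw [hflt, Finset.sum_filter_of_ne (fun i _ hi => by simp only [hc] at hi ⊢; omega), tele0]
  have hfillt : ∀ j, 1 ≤ j → J.filter (· < j) = J.filter (· ≤ j - 1) := by
    intro j hj
    ext i
    simp only [mem_filter]
    constructor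
    · rintro ⟨h1, h2⟩; exact ⟨h1, by omega⟩
    · rintro ⟨h1, h2⟩; exact ⟨h1, by omega⟩
  have cardTle : ∀ t, t ≤ n → (T.filter (· ≤ t)).card = t := by
    intro t ht
    have : T.filter (· ≤ t) = Finset.Icc 1 t := by
      ext i
      simp only [hT, mem_filter, Finset.mem_Icc]
      omega
    rw [this, Nat.card_Icc]
    omega
  have cardTlt : ∀ j, 1 ≤ j → j ≤ n → (T.filter (· < j)).card = j - 1 := by
    intro j h1 h2
    have : T.filter (· < j) = T.filter (· ≤ j - 1) := by
      ext i
      simp only [mem_filter]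
      constructor
      · rintro ⟨ha, hb⟩; exact ⟨ha, by omega⟩
      · rintro ⟨ha, hb⟩; exact ⟨ha, by omega⟩
    rw [this, cardTle (j - 1) (by omega)]
  -- equivalence between Corresponds and GoodSP
  have hiff : ∀ p : Finpartition T, Corresponds n S p ↔ GoodSP T J c p := by
    intro p
    constructor
    · intro h
      constructor
      · intro j hj
        rw [hJ, mem_filter] at hj
        obtain ⟨hjT, hjump⟩ := hj
        obtain ⟨C, hC, hjC, hCle⟩ := (h j hjT).1.mpr hjump
        exact ⟨C, hC, hjC, hCle, (h j hjT).2 C hC hjC hCle⟩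
      · intro C hC
        have hCne : C.Nonempty := p.nonempty_of_mem_parts hC
        set j := C.max' hCne with hjdef
        have hjC : j ∈ C := C.max'_mem hCne
        have hCle : ∀ x ∈ C, x ≤ j := fun x hx => C.le_max' x hx
        have hjT : j ∈ T := p.le hC hjC
        have hjump := (h j hjT).1.mp ⟨C, hC, hjC, hCle⟩
        exact ⟨j, by rw [hJ, mem_filter]; exact ⟨hjT, hjump⟩, hjC, hCle⟩
    · intro h j hjT
      constructor
      · constructor
        · rintro ⟨C, hC, hjC, hCle⟩
          obtain ⟨j', hj'J, hj'C, hj'le⟩ := h.2 C hC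
          have : j' = j := le_antisymm (hCle j' hj'C) (hj'le j hjC)
          subst this
          rw [hJ, mem_filter] at hj'J
          exact hj'J.2
        · intro hjump
          obtain ⟨C, hC, hjC, hCle, _⟩ := h.1 j (by rw [hJ, mem_filter]; exact ⟨hjT, hjump⟩)
          exact ⟨C, hC, hjC, hCle⟩
      · intro C hC hjC hCle
        obtain ⟨j', hj'J, hj'C, hj'le⟩ := h.2 C hC
        have hj'j : j' = j := le_antisymm (hCle j' hj'C) (hj'le j hjC)
        subst hj'j
        obtain ⟨D, hD, hj'D, _, hDcard⟩ := h.1 j' hj'J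
        rwa [p.eq_of_mem_parts hC hD hj'C hj'D]
    -- end hiff
  rw [Nat.card_congr (Equiv.subtypeEquivRight hiff)]
  rw [keySP J.card T J c rfl (filter_subset _ _)
    (by
      intro j hj
      rw [hJ, mem_filter] at hj
      simp only [hc]
      omega)
    (by
      rw [show (∑ j ∈ J, c j) = ∑ j ∈ J.filter (· ≤ n), c j by
        congr 1
        rw [hJ]
        ext i
        simp only [mem_filter, hT, Finset.mem_Icc]
        tauto]
      rw [sumJle n le_rfl, hn, hT, Nat.card_Icc]
      omega)
    (by
      intro j hj
      rw [hJ, mem_filter, hT, Finset.mem_Icc] at hj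
      rw [sumJle j hj.1.2, cardTle j hj.1.2]
      exact hle j hj.1.2)]
  refine Finset.prod_congr rfl fun j hj => ?_
  rw [hJ, mem_filter, hT, Finset.mem_Icc] at hj
  obtain ⟨⟨hj1, hjn⟩, hjump⟩ := hj
  rw [cardTlt j hj1 hjn, hfillt j hj1, sumJle (j - 1) (by omega)]
  have hS1 : S (j - 1) ≤ j - 1 := hle _ (by omega)
  have hSj : S j ≤ j := hle j hjn
  have hkey : j - S j = (j - 1 - S (j - 1)) - (c j - 1) ∧ c j - 1 ≤ j - 1 - S (j - 1) := by
    simp only [hc]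
    omega
  rw [show c j - 1 = (j - 1 - S (j - 1)) - (j - S j) by simp only [hc]; omega]
  exact Nat.choose_symm (by omega)
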